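/- Let Y be a finite set and ℓ: Y × Y → ℝ a symmetric loss with ℓ(y,y) = 0 for all y. Then there exist m ∈ ℕ, maps ψ, φ: Y → ℝ^m, and a constant c ≥ 0 such that for all y, z ∈ Y, ℓ(y,z) = ⟨ψ(y), ψ(z)⟩ − ⟨φ(y), φ(z)⟩, and ‖ψ(y)‖ = ‖φ(y)‖ = c for all y ∈ Y. -/

import Mathlib

open scoped RealInnerProductSpace

theorem stmt_0 {Y : Type*} [Fintype Y] (ℓ : Y → Y → ℝ)
    (hsymm : ∀ y z, ℓ y z = ℓ z y) (hdiag : ∀ y, ℓ y y = 0) :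
    ∃ (m : ℕ) (ψ φ : Y → EuclideanSpace ℝ (Fin m)) (c : ℝ), 0 ≤ c ∧
      (∀ y z, ℓ y z = ⟪ψ y, ψ z⟫ - ⟪φ y, φ z⟫) ∧
      (∀ y, ‖ψ y‖ = c ∧ ‖φ y‖ = c) := by
  classical
  set n := Fintype.card Y with hn
  obtain e := Fintype.equivFin Y
  set f : Y → Y → ℝ := fun y a => (if a = y then 1 else 0) + ℓ y a / 4 with hf
  set g : Y → Y → ℝ := fun y a => (if a = y then 1 else 0) - ℓ y a / 4 with hg
  have key : ∀ y z, ∑ a, (f y a * f z a - g y a * g z a) = ℓ y z := by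
    intro y z
    have hpt : ∀ a, f y a * f z a - g y a * g z a =
        (if a = y then ℓ z a / 2 else 0) + (if a = z then ℓ y a / 2 else 0) := by
      intro a
      by_cases h1 : a = y <;> by_cases h2 : a = z <;>
        [skip; skip; skip; skip] <;> subst_vars <;>
        simp [hf, hg, hdiag, *] <;> first | ring | (intro h; subst h; simp [hdiag])
    rw [Finset.sum_congr rfl fun a _ => hpt a, Finset.sum_add_distrib,
      Finset.sum_ite_eq' Finset.univ y (fun a => ℓ z a / 2),
      Finset.sum_ite_eq' Finset.univ z (fun a => ℓ y a / 2)]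
    simp only [Finset.mem_univ, if_true]
    rw [hsymm z y]; ring
  set s : Y → ℝ := fun y => ∑ a, (f y a) ^ 2 with hs
  have hgs : ∀ y, ∑ a, (g y a) ^ 2 = s y := by
    intro y
    have h := key y y
    rw [hdiag y, Finset.sum_sub_distrib] at h
    simp only [← sq] at h
    have : s y = ∑ a, f y a ^ 2 := rfl
    linarith
  set C : ℝ := ∑ y, s y with hC
  have hs_nonneg : ∀ y, 0 ≤ s y := fun y => Finset.sum_nonneg fun a _ => sq_nonneg _
  have hsC : ∀ y, s y ≤ C :=
    fun y => Finset.single_le_sum (fun z _ => hs_nonneg z) (Finset.mem_univ y)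
  set t : Y → ℝ := fun y => Real.sqrt (C - s y) with ht
  have ht2 : ∀ y, t y ^ 2 = C - s y := fun y => Real.sq_sqrt (by linarith [hsC y])
  set ψ : Y → EuclideanSpace ℝ (Fin (n + 1)) :=
    fun y => WithLp.toLp 2 (Fin.snoc (α := fun _ => ℝ) (fun j : Fin n => f y (e.symm j)) (t y)) with hψ
  set φ : Y → EuclideanSpace ℝ (Fin (n + 1)) :=
    fun y => WithLp.toLp 2 (Fin.snoc (α := fun _ => ℝ) (fun j : Fin n => g y (e.symm j)) (t y)) with hφ
  have inner_psi : ∀ y z, ⟪ψ y, ψ z⟫ = (∑ a, f y a * f z a) + t y * t z := by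
    intro y z
    rw [PiLp.inner_apply]
    simp only [RCLike.inner_apply, conj_trivial]
    rw [Fin.sum_univ_castSucc]
    simp only [hψ, PiLp.toLp_apply, Fin.snoc_castSucc, Fin.snoc_last]
    rw [e.symm.sum_comp (fun a => f z a * f y a)]
    exact congrArg₂ (· + ·) (Finset.sum_congr rfl fun a _ => mul_comm _ _) (mul_comm _ _)
  have inner_phi : ∀ y z, ⟪φ y, φ z⟫ = (∑ a, g y a * g z a) + t y * t z := by
    intro y z
    rw [PiLp.inner_apply]
    simp only [RCLike.inner_apply, conj_trivial]
    rw [Fin.sum_univ_castSucc]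
    simp only [hφ, PiLp.toLp_apply, Fin.snoc_castSucc, Fin.snoc_last]
    rw [e.symm.sum_comp (fun a => g z a * g y a)]
    exact congrArg₂ (· + ·) (Finset.sum_congr rfl fun a _ => mul_comm _ _) (mul_comm _ _)
  refine ⟨n + 1, ψ, φ, Real.sqrt C, Real.sqrt_nonneg C, ?_, ?_⟩
  · intro y z
    rw [inner_psi, inner_phi, ← key y z, Finset.sum_sub_distrib]
    ring
  · intro y
    have hC0 : 0 ≤ C := Finset.sum_nonneg fun z _ => hs_nonneg z
    constructor
    · have := inner_psi y y
      simp only [← sq] at this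
      rw [ht2] at this
      have hsy : ∑ a, f y a ^ 2 = s y := rfl
      have hnorm : ‖ψ y‖ ^ 2 = C := by
        rw [← real_inner_self_eq_norm_sq, this, hsy]; ring
      have := congrArg Real.sqrt hnorm
      rwa [Real.sqrt_sq (norm_nonneg _)] at this
    · have := inner_phi y y
      simp only [← sq] at this
      rw [hgs y, ht2] at this
      have hnorm : ‖φ y‖ ^ 2 = C := by
        rw [← real_inner_self_eq_norm_sq, this]; ring
      have := congrArg Real.sqrt hnorm
      rwa [Real.sqrt_sq (norm_nonneg _)] at this
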